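/- For all integers n ≥ 2 and odd i ≥ 1, the Horadam sequence satisfies W_{ni+i} = Σ_{j=0}^{⌊n/2⌋} C(n−j, j) · V_i^{n−2j} · q^{ij} · W_i + q^i · a · Σ_{j=0}^{⌊(n−1)/2⌋} C(n−j−1, j) · V_i^{n−2j−1} · q^{ij}, where V is the generalized Lucas sequence with the same parameters p, q and C(m,k) denotes the binomial coefficient. -/

import Mathlib

open Finset

private def fib2 (P Q : ℤ) : ℕ → ℤ
  | 0 => 0
  | 1 => 1
  | (n+2) => P * fib2 P Q (n+1) + Q * fib2 P Q n

private def Ssum (P Q : ℤ) (m : ℕ) : ℤ :=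
  ∑ j ∈ range (m/2+1), ((m-j).choose j : ℤ) * P^(m-2*j) * Q^j

private lemma Ssum_ext (P Q : ℤ) (m N : ℕ) (h : m/2+1 ≤ N) :
    Ssum P Q m = ∑ j ∈ range N, ((m-j).choose j : ℤ) * P^(m-2*j) * Q^j := by
  apply Finset.sum_subset (Finset.range_subset_range.mpr h)
  intro x hx hx'
  simp only [Finset.mem_range] at hx hx'
  have : (m - x).choose x = 0 := Nat.choose_eq_zero_of_lt (by omega)
  simp [this]

private lemma Ssum_rec (P Q : ℤ) (m : ℕ) :
    Ssum P Q (m+2) = P * Ssum P Q (m+1) + Q * Ssum P Q m := by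
  rw [Ssum_ext P Q (m+2) (m+2) (by omega), Ssum_ext P Q (m+1) (m+2) (by omega),
      Ssum_ext P Q m (m+2) (by omega)]
  rw [Finset.sum_range_succ'
      (fun j => ((m+2-j).choose j : ℤ) * P^(m+2-2*j) * Q^j) (m+1)]
  rw [Finset.sum_range_succ'
      (fun j => ((m+1-j).choose j : ℤ) * P^(m+1-2*j) * Q^j) (m+1)]
  rw [Finset.sum_range_succ
      (fun j => ((m-j).choose j : ℤ) * P^(m-2*j) * Q^j) (m+1)]
  have hz : ((m - (m+1)).choose (m+1) : ℤ) = 0 := by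
    have : m - (m+1) = 0 := by omega
    simp [this]
  rw [hz]
  rw [mul_add, mul_add, Finset.mul_sum, Finset.mul_sum]
  have key : ∀ k ∈ range (m+1),
      ((m+2-(k+1)).choose (k+1) : ℤ) * P^(m+2-2*(k+1)) * Q^(k+1) =
      P * (((m+1-(k+1)).choose (k+1) : ℤ) * P^(m+1-2*(k+1)) * Q^(k+1)) +
      Q * (((m-k).choose k : ℤ) * P^(m-2*k) * Q^k) := by
    intro k hk
    simp only [Finset.mem_range] at hk
    have e1 : m+2-(k+1) = (m-k)+1 := by omega
    have pascal : ((m-k)+1).choose (k+1) = (m-k).choose k + (m-k).choose (k+1) :=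
      Nat.choose_succ_succ _ _
    rw [e1, pascal]
    by_cases h2 : 2*k+1 ≤ m
    · have e2 : m+2-2*(k+1) = (m+1-2*(k+1))+1 := by omega
      have e3 : m-2*k = (m+1-2*(k+1))+1 := by omega
      have e4 : m+1-(k+1) = m-k := by omega
      rw [e2, e3, e4]
      push_cast
      ring
    · have c1 : (m-k).choose (k+1) = 0 := Nat.choose_eq_zero_of_lt (by omega)
      by_cases h3 : m = 2*k
      · subst h3
        simp only [show 2*k+2-2*(k+1) = 0 from by omega,
          show 2*k-2*k = 0 from by omega,
          show 2*k+1-(k+1) = k from by omega,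
          show 2*k+1-2*(k+1) = 0 from by omega,
          show 2*k-k = k from by omega,
          Nat.choose_self, Nat.choose_succ_self, pow_zero]
        push_cast
        ring
      · have c2 : (m-k).choose k = 0 := Nat.choose_eq_zero_of_lt (by omega)
        simp [c1, c2]
  rw [Finset.sum_congr rfl key, Finset.sum_add_distrib]
  simp only [Nat.choose_zero_right, Nat.cast_one]
  push_cast
  ring

private lemma Ssum_eq_fib2 (P Q : ℤ) : ∀ m, Ssum P Q m = fib2 P Q (m+1) := by
  intro m
  induction m using Nat.strong_induction_on with
  | _ m ih =>
    match m with
    | 0 => simp [Ssum, fib2]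
    | 1 => simp [Ssum, fib2]
    | (k+2) =>
      rw [Ssum_rec, ih (k+1) (by omega), ih k (by omega)]
      rfl

/-- Horadam binomial sum, odd index i. -/
theorem horadam_binomial_odd (a b p q : ℤ) (W V : ℕ → ℤ)
    (hW0 : W 0 = a) (hW1 : W 1 = b)
    (hW : ∀ n : ℕ, W (n + 2) = p * W (n + 1) + q * W n)
    (hV0 : V 0 = 2) (hV1 : V 1 = p)
    (hV : ∀ n : ℕ, V (n + 2) = p * V (n + 1) + q * V n)
    (n i : ℕ) (hn : 2 ≤ n) (hi : 1 ≤ i) (hodd : Odd i) :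
    W (n * i + i) =
      (∑ j ∈ Finset.range (n / 2 + 1),
        ((n - j).choose j : ℤ) * V i ^ (n - 2 * j) * q ^ (i * j) * W i) +
      q ^ i * a * ∑ j ∈ Finset.range ((n - 1) / 2 + 1),
        ((n - j - 1).choose j : ℤ) * V i ^ (n - 2 * j - 1) * q ^ (i * j) := by
  -- addition formula
  have addf : ∀ m, (∀ k, W (k + 2*m) = V m * W (k+m) - (-q)^m * W k) := by
    have key : ∀ m, (∀ k, W (k + 2*m) = V m * W (k+m) - (-q)^m * W k) ∧
        (∀ k, W (k + 2*(m+1)) = V (m+1) * W (k+(m+1)) - (-q)^(m+1) * W k) := by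
      intro m
      induction m with
      | zero =>
        constructor
        · intro k
          simp only [Nat.mul_zero, Nat.add_zero, hV0, pow_zero]
          ring
        · intro k
          have h := hW k
          simp only [show k + 2*1 = k+2 from by ring] at *
          rw [h, hV1]
          ring
      | succ m ih =>
        refine ⟨ih.2, ?_⟩
        intro k
        have h1 := ih.2 (k+2)
        have h2 := ih.2 k
        have h3 := ih.1 (k+2)
        have h4 := hW (k+m+1)
        have hVv := hV m
        simp only [show k+2+2*(m+1) = k+2*m+4 from by ring,
          show k+2+(m+1) = k+m+3 from by ring,
          show k+2*(m+1) = k+2*m+2 from by ring,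
          show k+(m+1) = k+m+1 from by ring,
          show k+2+2*m = k+2*m+2 from by ring,
          show k+2+m = k+m+2 from by ring,
          show k+m+1+2 = k+m+3 from by ring,
          show k+m+1+1 = k+m+2 from by ring,
          show k+2*(m+1+1) = k+2*m+4 from by ring,
          show k+(m+1+1) = k+m+2 from by ring,
          show m+1+1 = m+2 from by ring] at h1 h2 h3 h4 ⊢
        rw [hVv]
        simp only [pow_succ] at h1 h2 ⊢
        linear_combination h1 + V (m+1) * h4 - q * h2 + q * h3
    exact fun m => (key m).1
  have hneg : (-q)^i = -q^i := Odd.neg_pow hodd q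
  set P := V i with hP
  set Q := q^i with hQ
  -- main claim
  have main : ∀ m, W (m * i + i) = fib2 P Q (m+1) * W i + Q * a * fib2 P Q m := by
    have key : ∀ m, W (m * i + i) = fib2 P Q (m+1) * W i + Q * a * fib2 P Q m ∧
        W ((m+1) * i + i) = fib2 P Q (m+2) * W i + Q * a * fib2 P Q (m+1) := by
      intro m
      induction m with
      | zero =>
        constructor
        · simp [fib2]
        · have h := addf i 0
          rw [show (0+1)*i + i = 0 + 2*i from by ring, h, hneg, hW0]
          simp only [Nat.zero_add, fib2, ← hP]
          ring
      | succ m ih =>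
        refine ⟨ih.2, ?_⟩
        have h := addf i (m * i + i)
        rw [show m*i+i+2*i = (m+1+1)*i + i from by ring,
            show m*i+i+i = (m+1)*i + i from by ring] at h
        rw [h, hneg, ih.1, ih.2]
        show _ = (P * fib2 P Q (m+2) + Q * fib2 P Q (m+1)) * W i +
          Q * a * (P * fib2 P Q (m+1) + Q * fib2 P Q m)
        ring
    exact fun m => (key m).1
  rw [main n]
  -- rewrite the sums
  have s1 : (∑ j ∈ Finset.range (n / 2 + 1),
      ((n - j).choose j : ℤ) * V i ^ (n - 2 * j) * q ^ (i * j) * W i) =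
      fib2 P Q (n+1) * W i := by
    rw [← Ssum_eq_fib2, Ssum, Finset.sum_mul]
    apply Finset.sum_congr rfl
    intro j hj
    rw [pow_mul]
  have s2 : (∑ j ∈ Finset.range ((n - 1) / 2 + 1),
      ((n - j - 1).choose j : ℤ) * V i ^ (n - 2 * j - 1) * q ^ (i * j)) =
      fib2 P Q n := by
    rw [show (fib2 P Q n) = fib2 P Q ((n-1)+1) from by rw [Nat.sub_add_cancel (by omega)]]
    rw [← Ssum_eq_fib2, Ssum]
    apply Finset.sum_congr rfl
    intro j hj
    rw [pow_mul, show n - j - 1 = n - 1 - j from by omega,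
        show n - 2*j - 1 = n - 1 - 2*j from by omega]
  rw [s1, s2]
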